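/- Let T be a finite rooted binary tree (every vertex has either exactly two children or none) containing two leaves whose depths differ by at least 2. Then there exists a finite rooted binary tree T' with the same number of leaves as T such that g(T') > g(T). -/

import Mathlib

attribute [local instance] Classical.propDecidable

/-- A finite rooted tree, encoded by a parent function together with a depth
function recording the graph distance to the root. -/
structure FiniteRootedTree where
  V : Type
  fintypeV : Fintype V
  root : V
  parent : V → V
  depth : V → ℕ
  depth_root : depth root = 0
  depth_parent : ∀ v, v ≠ root → depth v = depth (parent v) + 1
  root_of_depth_zero : ∀ v, depth v = 0 → v = root

attribute [instance] FiniteRootedTree.fintypeV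

namespace FiniteRootedTree

/-- `u` is a child of `v`. -/
def IsChild (T : FiniteRootedTree) (u v : T.V) : Prop :=
  u ≠ T.root ∧ T.parent u = v

/-- The number of children of `v`. -/
noncomputable def numChildren (T : FiniteRootedTree) (v : T.V) : ℕ :=
  Set.ncard {u : T.V | T.IsChild u v}

/-- A leaf is a vertex with no children. -/
def IsLeaf (T : FiniteRootedTree) (v : T.V) : Prop :=
  ∀ u, ¬ T.IsChild u v

/-- The finset of leaves of `T`. -/
noncomputable def leaves (T : FiniteRootedTree) : Finset T.V :=
  Finset.univ.filter fun v => T.IsLeaf v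

/-- Probability that the random root-to-leaf walk ends at the leaf `l`:
the product of `1 / c(v)` over the vertices `v ≠ l` on the root-to-`l` path
(equivalently, over the strict ancestors `parent^[k+1] l` of `l`). -/
noncomputable def leafProb (T : FiniteRootedTree) (l : T.V) : ℝ :=
  ∏ k ∈ Finset.range (T.depth l), (1 : ℝ) / (T.numChildren (T.parent^[k + 1] l))

/-- The expected length of the random root-to-leaf walk in `T`. -/
noncomputable def g (T : FiniteRootedTree) : ℝ :=
  ∑ l ∈ T.leaves, (T.depth l : ℝ) * T.leafProb l

/-- The number of vertices of the subtree of `T` rooted at `v`, i.e. the number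
of vertices `u` having `v` as an ancestor (including `v` itself). -/
noncomputable def subtreeSize (T : FiniteRootedTree) (v : T.V) : ℕ :=
  Set.ncard {u : T.V | ∃ k : ℕ, T.parent^[k] u = v}

end FiniteRootedTree

/-- The truncations of `T₁` and `T₂` at level `h` (the rooted trees induced on
the vertices of depth at most `h`) are isomorphic as rooted trees. -/
def TruncIso (T₁ T₂ : FiniteRootedTree) (h : ℕ) : Prop :=
  ∃ φ : {v : T₁.V // T₁.depth v ≤ h} ≃ {v : T₂.V // T₂.depth v ≤ h},
    (φ ⟨T₁.root, by simp [T₁.depth_root]⟩).val = T₂.root ∧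
    ∀ u u' : {v : T₁.V // T₁.depth v ≤ h},
      T₁.IsChild u'.val u.val ↔ T₂.IsChild (φ u').val (φ u).val

/-- `InjM h U` is the set of root-respecting injective homomorphisms from the
rooted tree `U` into the complete binary tree `M_h`, whose vertices are the
boolean lists of length at most `h`, rooted at the empty list, with the
children of a list being its two one-element extensions. -/
def InjM (h : ℕ) (U : FiniteRootedTree) : Set (U.V → List Bool) :=
  {α | Function.Injective α ∧ (∀ u, (α u).length ≤ h) ∧ α U.root = [] ∧
    ∀ u u' : U.V, U.IsChild u' u → ∃ b : Bool, α u' = α u ++ [b]}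

namespace FiniteRootedTree

lemma depth_iterate (T : FiniteRootedTree) (v : T.V) :
    ∀ k, k ≤ T.depth v → T.depth (T.parent^[k] v) = T.depth v - k := by
  intro k
  induction k with
  | zero => simp
  | succ k ih =>
    intro hk
    have h1 := ih (Nat.le_of_succ_le hk)
    have hne : T.parent^[k] v ≠ T.root := by
      intro h
      rw [h, T.depth_root] at h1
      omega
    have h2 := T.depth_parent _ hne
    rw [Function.iterate_succ_apply']
    omega

lemma numChildren_two (T : FiniteRootedTree)
    (hbin : ∀ v : T.V, T.numChildren v = 2 ∨ T.numChildren v = 0)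
    {u : T.V} (h : ∃ w, T.IsChild w u) : T.numChildren u = 2 := by
  rcases hbin u with h2 | h0
  · exact h2
  · exfalso
    obtain ⟨w, hw⟩ := h
    have hpos : 0 < {x : T.V | T.IsChild x u}.ncard :=
      (Set.ncard_pos (Set.toFinite _)).mpr ⟨w, hw⟩
    have : T.numChildren u = {x : T.V | T.IsChild x u}.ncard := rfl
    omega

lemma leafProb_binary (T : FiniteRootedTree)
    (hbin : ∀ v : T.V, T.numChildren v = 2 ∨ T.numChildren v = 0)
    (l : T.V) : T.leafProb l = (1 / 2 : ℝ) ^ T.depth l := by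
  have hfac : ∀ k ∈ Finset.range (T.depth l),
      (1 : ℝ) / (T.numChildren (T.parent^[k + 1] l)) = 1 / 2 := by
    intro k hk
    rw [Finset.mem_range] at hk
    have hd := T.depth_iterate l k (le_of_lt hk)
    have hne : T.parent^[k] l ≠ T.root := by
      intro h
      rw [h, T.depth_root] at hd
      omega
    have hchild : T.IsChild (T.parent^[k] l) (T.parent^[k + 1] l) :=
      ⟨hne, (Function.iterate_succ_apply' T.parent k l).symm⟩
    rw [T.numChildren_two hbin ⟨_, hchild⟩]
    norm_num
  rw [leafProb, Finset.prod_congr rfl hfac, Finset.prod_const, Finset.card_range]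

lemma g_binary (T : FiniteRootedTree)
    (hbin : ∀ v : T.V, T.numChildren v = 2 ∨ T.numChildren v = 0) :
    T.g = ∑ l ∈ T.leaves, (T.depth l : ℝ) * (1 / 2) ^ T.depth l :=
  Finset.sum_congr rfl fun l _ => by rw [T.leafProb_binary hbin]

/-- The modified tree: reparent the two sibling leaves `s`, `l₂` under the leaf `l₁`. -/
noncomputable def modTree (T : FiniteRootedTree) (l₁ s l₂ : T.V)
    (hs : s ≠ T.root) (hl₂ : l₂ ≠ T.root)
    (hl₁s : l₁ ≠ s) (hl₁l₂ : l₁ ≠ l₂)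
    (hsleaf : T.IsLeaf s) (hl₂leaf : T.IsLeaf l₂) : FiniteRootedTree where
  V := T.V
  fintypeV := T.fintypeV
  root := T.root
  parent v := if v = s ∨ v = l₂ then l₁ else T.parent v
  depth v := if v = s ∨ v = l₂ then T.depth l₁ + 1 else T.depth v
  depth_root := by
    rw [if_neg, T.depth_root]
    push_neg
    exact ⟨fun h => hs h.symm, fun h => hl₂ h.symm⟩
  depth_parent := by
    intro v hv
    by_cases h : v = s ∨ v = l₂
    · rw [if_pos h, if_pos h, if_neg (by push_neg; exact ⟨hl₁s, hl₁l₂⟩)]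
    · have hp : ¬(T.parent v = s ∨ T.parent v = l₂) := by
        rintro (h' | h')
        · exact hsleaf v ⟨hv, h'⟩
        · exact hl₂leaf v ⟨hv, h'⟩
      rw [if_neg h, if_neg h, if_neg hp]
      exact T.depth_parent v hv
  root_of_depth_zero := by
    intro v hv
    by_cases h : v = s ∨ v = l₂
    · rw [if_pos h] at hv
      omega
    · rw [if_neg h] at hv
      exact T.root_of_depth_zero v hv

end FiniteRootedTree

lemma key_ineq (d E : ℕ) (h : d + 1 ≤ E) :
    (d : ℝ) * (1 / 2) ^ d + ((E + 1 : ℕ) : ℝ) * (1 / 2) ^ (E + 1)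
      + ((E + 1 : ℕ) : ℝ) * (1 / 2) ^ (E + 1)
    < (E : ℝ) * (1 / 2) ^ E + ((d + 1 : ℕ) : ℝ) * (1 / 2) ^ (d + 1)
      + ((d + 1 : ℕ) : ℝ) * (1 / 2) ^ (d + 1) := by
  have hdE : d < E := h
  have hpow : (1 / 2 : ℝ) ^ E < (1 / 2 : ℝ) ^ d :=
    pow_lt_pow_right_of_lt_one₀ (by norm_num) (by norm_num) hdE
  rw [pow_succ, pow_succ]
  push_cast
  nlinarith [hpow]

/-- a binary tree with two leaves whose depths differ by at least 2
is not of maximal expected walk length among binary trees with that many leaves. -/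
theorem stmt_11 (T : FiniteRootedTree)
    (hbin : ∀ v : T.V, T.numChildren v = 2 ∨ T.numChildren v = 0)
    (hleaves : ∃ l₁ l₂ : T.V, T.IsLeaf l₁ ∧ T.IsLeaf l₂ ∧
      T.depth l₁ + 2 ≤ T.depth l₂) :
    ∃ T' : FiniteRootedTree, (∀ v : T'.V, T'.numChildren v = 2 ∨ T'.numChildren v = 0) ∧
      T'.leaves.card = T.leaves.card ∧ T.g < T'.g := by
  obtain ⟨l₁, l₂0, hl₁leaf, hl₂0leaf, hdep0⟩ := hleaves
  obtain ⟨l₂, -, hmax⟩ :=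
    Finset.exists_max_image Finset.univ T.depth ⟨l₁, Finset.mem_univ _⟩
  have hmax' : ∀ v : T.V, T.depth v ≤ T.depth l₂ := fun v => hmax v (Finset.mem_univ v)
  have hdD : T.depth l₁ + 2 ≤ T.depth l₂ := le_trans hdep0 (hmax' l₂0)
  obtain ⟨E, hE⟩ : ∃ E, T.depth l₂ = E + 1 := ⟨T.depth l₂ - 1, by omega⟩
  have hleaf_max : ∀ v : T.V, T.depth v = T.depth l₂ → T.IsLeaf v := by
    intro v hv u hu
    have h1 := T.depth_parent u hu.1
    rw [hu.2] at h1
    have := hmax' u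
    omega
  have hl₂root : l₂ ≠ T.root := by
    intro h
    have := T.depth_root
    rw [← h] at this
    omega
  have hl₂leaf : T.IsLeaf l₂ := hleaf_max l₂ rfl
  set p := T.parent l₂ with hpdef
  have hcl₂ : T.IsChild l₂ p := ⟨hl₂root, rfl⟩
  have hdp : T.depth p = E := by
    have h := T.depth_parent l₂ hl₂root
    rw [← hpdef] at h
    omega
  have hp2' : {u : T.V | T.IsChild u p}.ncard = 2 := T.numChildren_two hbin ⟨l₂, hcl₂⟩
  obtain ⟨a, b, hab, hset⟩ := Set.ncard_eq_two.mp hp2'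
  have hl₂ab : l₂ ∈ ({a, b} : Set T.V) := by rw [← hset]; exact hcl₂
  obtain ⟨s, hsl₂, hpair⟩ : ∃ s, s ≠ l₂ ∧ {u : T.V | T.IsChild u p} = {s, l₂} := by
    simp only [Set.mem_insert_iff, Set.mem_singleton_iff] at hl₂ab
    rcases hl₂ab with rfl | rfl
    · exact ⟨b, fun h => hab h.symm, by rw [hset, Set.pair_comm]⟩
    · exact ⟨a, hab, hset⟩
  have hcs : T.IsChild s p := by
    have : s ∈ {u : T.V | T.IsChild u p} := by rw [hpair]; exact Set.mem_insert _ _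
    exact this
  have hsroot : s ≠ T.root := hcs.1
  have hds : T.depth s = E + 1 := by
    have h := T.depth_parent s hsroot
    rw [hcs.2] at h
    omega
  have hsleaf : T.IsLeaf s := hleaf_max s (by omega)
  have hl₁s : l₁ ≠ s := by
    intro h
    rw [← h] at hds
    omega
  have hl₁l₂ : l₁ ≠ l₂ := by
    intro h
    rw [← h] at hdD
    omega
  have hl₁p : l₁ ≠ p := by
    intro h
    rw [← h] at hdp
    omega
  have hps : p ≠ s := by
    intro h
    rw [h] at hdp
    omega
  have hpl₂ : p ≠ l₂ := by
    intro h
    rw [h] at hdp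
    omega
  set T' := T.modTree l₁ s l₂ hsroot hl₂root hl₁s hl₁l₂ hsleaf hl₂leaf with hT'
  have hdepth' : ∀ v : T.V,
      T'.depth v = if v = s ∨ v = l₂ then T.depth l₁ + 1 else T.depth v := fun v => rfl
  have hchild' : ∀ u v : T.V, T'.IsChild u v ↔
      ((u = s ∨ u = l₂) ∧ v = l₁ ∨ ¬(u = s ∨ u = l₂) ∧ T.IsChild u v) := by
    intro u v
    show (u ≠ T.root ∧ (if u = s ∨ u = l₂ then l₁ else T.parent u) = v) ↔ _
    by_cases h : u = s ∨ u = l₂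
    · rw [if_pos h]
      constructor
      · rintro ⟨-, h2⟩
        exact Or.inl ⟨h, h2.symm⟩
      · rintro (⟨-, h2⟩ | ⟨h1, -⟩)
        · refine ⟨?_, h2.symm⟩
          rcases h with rfl | rfl
          · exact hsroot
          · exact hl₂root
        · exact absurd h h1
    · rw [if_neg h]
      constructor
      · intro h1
        exact Or.inr ⟨h, h1⟩
      · rintro (⟨h1, -⟩ | ⟨-, h1⟩)
        · exact absurd h1 h
        · exact h1
  have hbin' : ∀ v : T'.V, T'.numChildren v = 2 ∨ T'.numChildren v = 0 := by
    intro v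
    by_cases hv1 : v = l₁
    · left
      have hSet : {u : T.V | T'.IsChild u v} = {s, l₂} := by
        ext u
        simp only [Set.mem_setOf_eq, hchild' u v, Set.mem_insert_iff, Set.mem_singleton_iff]
        constructor
        · rintro (⟨h, -⟩ | ⟨-, h⟩)
          · exact h
          · rw [hv1] at h
            exact absurd h (hl₁leaf u)
        · intro h
          exact Or.inl ⟨h, hv1⟩
      show {u : T.V | T'.IsChild u v}.ncard = 2
      rw [hSet]
      exact Set.ncard_pair hsl₂
    · by_cases hv2 : v = p
      · right
        have hSet : {u : T.V | T'.IsChild u v} = ∅ := by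
          ext u
          simp only [Set.mem_setOf_eq, hchild' u v, Set.mem_empty_iff_false, iff_false]
          rintro (⟨-, h2⟩ | ⟨h1, h2⟩)
          · exact hv1 h2
          · rw [hv2] at h2
            have hmem2 : u ∈ ({s, l₂} : Set T.V) := by rw [← hpair]; exact h2
            simp only [Set.mem_insert_iff, Set.mem_singleton_iff] at hmem2
            exact h1 hmem2
        show {u : T.V | T'.IsChild u v}.ncard = 0
        rw [hSet]
        simp
      · have hSet : {u : T.V | T'.IsChild u v} = {u : T.V | T.IsChild u v} := by
          ext u
          simp only [Set.mem_setOf_eq, hchild' u v]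
          constructor
          · rintro (⟨-, h⟩ | ⟨-, h⟩)
            · exact absurd h hv1
            · exact h
          · intro h
            refine Or.inr ⟨?_, h⟩
            rintro (rfl | rfl)
            · exact hv2 (h.2.symm.trans hcs.2)
            · exact hv2 (h.2.symm.trans hpdef.symm)
        have heq : T'.numChildren v = T.numChildren v := by
          show {u : T.V | T'.IsChild u v}.ncard = _
          rw [hSet]
          rfl
        rw [heq]
        exact hbin v
  have hpleaf' : ¬ T.IsLeaf p := fun h => h l₂ hcl₂
  have hlv : (T'.leaves : Finset T.V) = insert p (T.leaves.erase l₁) := by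
    ext v
    refine Iff.trans ?_ ((Finset.mem_insert (s := T.leaves.erase l₁) (a := v) (b := p)).trans
      (or_congr Iff.rfl ((Finset.mem_erase (s := T.leaves) (a := v) (b := l₁)).trans
        (and_congr Iff.rfl ((Finset.mem_filter (s := Finset.univ) (p := fun v => T.IsLeaf v)
          (a := v)).trans (and_iff_right (Finset.mem_univ _))))))).symm
    simp only [FiniteRootedTree.leaves, Finset.mem_filter, Finset.mem_univ, true_and,
      Finset.mem_insert, Finset.mem_erase]
    constructor
    · intro hv
      by_cases h : v = p
      · exact Or.inl h
      · have hvl₁ : v ≠ l₁ := by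
          intro hveq
          exact hv s ((hchild' s v).mpr (Or.inl ⟨Or.inl rfl, hveq⟩))
        refine Or.inr ⟨hvl₁, ?_⟩
        intro u hu
        have hus : u ≠ s := by
          intro hueq
          rw [hueq] at hu
          exact h (hu.2.symm.trans hcs.2)
        have hul₂ : u ≠ l₂ := by
          intro hueq
          rw [hueq] at hu
          exact h (hu.2.symm.trans hpdef.symm)
        exact hv u ((hchild' u v).mpr (Or.inr ⟨by tauto, hu⟩))
    · rintro (hvp | ⟨hvl₁, hlf⟩)
      · intro u hu
        rcases (hchild' u v).mp hu with ⟨-, h2⟩ | ⟨h1, h2⟩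
        · exact hl₁p (h2.symm.trans hvp)
        · rw [hvp] at h2
          have hmem2 : u ∈ ({s, l₂} : Set T.V) := by rw [← hpair]; exact h2
          exact h1 ((Set.mem_insert_iff.mp hmem2).imp id Set.mem_singleton_iff.mp)
      · intro u hu
        rcases (hchild' u v).mp hu with ⟨-, h2⟩ | ⟨-, h2⟩
        · exact hvl₁ h2
        · exact hlf u h2
  have hl₁mem : l₁ ∈ T.leaves := by
    simp only [FiniteRootedTree.leaves, Finset.mem_filter, Finset.mem_univ, true_and]
    exact hl₁leaf
  have hsmem : s ∈ T.leaves := by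
    simp only [FiniteRootedTree.leaves, Finset.mem_filter, Finset.mem_univ, true_and]
    exact hsleaf
  have hl₂mem : l₂ ∈ T.leaves := by
    simp only [FiniteRootedTree.leaves, Finset.mem_filter, Finset.mem_univ, true_and]
    exact hl₂leaf
  have hpnotmem : p ∉ T.leaves.erase l₁ := by
    rw [Finset.mem_erase]
    rintro ⟨-, h⟩
    simp only [FiniteRootedTree.leaves, Finset.mem_filter, Finset.mem_univ, true_and] at h
    exact hpleaf' h
  have hcard : T'.leaves.card = T.leaves.card := by
    rw [show (T'.leaves.card : ℕ) = (insert p (T.leaves.erase l₁)).card from by rw [← hlv]; rfl,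
      Finset.card_insert_of_notMem hpnotmem, Finset.card_erase_of_mem hl₁mem]
    have : 0 < T.leaves.card := Finset.card_pos.mpr ⟨l₁, hl₁mem⟩
    omega
  have hsmem1 : s ∈ T.leaves.erase l₁ :=
    Finset.mem_erase.mpr ⟨Ne.symm hl₁s, hsmem⟩
  have hl₂mem1 : l₂ ∈ (T.leaves.erase l₁).erase s :=
    Finset.mem_erase.mpr ⟨Ne.symm hsl₂, Finset.mem_erase.mpr ⟨Ne.symm hl₁l₂, hl₂mem⟩⟩
  have hgT : T.g = ∑ l ∈ T.leaves, (T.depth l : ℝ) * (1 / 2) ^ T.depth l := T.g_binary hbin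
  set G : T.V → ℝ := fun x => ((T'.depth x : ℝ) * (1 / 2) ^ T'.depth x) with hG
  have hgT' : T'.g = ∑ l ∈ insert p (T.leaves.erase l₁), G l := by
    rw [T'.g_binary hbin']
    exact Finset.sum_congr hlv fun _ _ => rfl
  have hsplitT : ∑ l ∈ T.leaves, (T.depth l : ℝ) * (1 / 2) ^ T.depth l
      = (T.depth l₁ : ℝ) * (1 / 2) ^ T.depth l₁
        + ((T.depth s : ℝ) * (1 / 2) ^ T.depth s
          + ((T.depth l₂ : ℝ) * (1 / 2) ^ T.depth l₂
            + ∑ l ∈ ((T.leaves.erase l₁).erase s).erase l₂,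
                (T.depth l : ℝ) * (1 / 2) ^ T.depth l)) := by
    rw [Finset.add_sum_erase _ (fun l => (T.depth l : ℝ) * (1 / 2) ^ T.depth l) hl₂mem1,
      Finset.add_sum_erase _ (fun l => (T.depth l : ℝ) * (1 / 2) ^ T.depth l) hsmem1,
      Finset.add_sum_erase _ (fun l => (T.depth l : ℝ) * (1 / 2) ^ T.depth l) hl₁mem]
  have hsplitT' : ∑ l ∈ insert p (T.leaves.erase l₁), G l
      = G p + (G s + (G l₂ + ∑ l ∈ ((T.leaves.erase l₁).erase s).erase l₂, G l)) := by
    rw [Finset.sum_insert hpnotmem, Finset.add_sum_erase _ G hl₂mem1,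
      Finset.add_sum_erase _ G hsmem1]
  have hrem : ∑ l ∈ ((T.leaves.erase l₁).erase s).erase l₂, G l
      = ∑ l ∈ ((T.leaves.erase l₁).erase s).erase l₂,
        (T.depth l : ℝ) * (1 / 2) ^ T.depth l := by
    refine Finset.sum_congr rfl fun x hx => ?_
    rw [Finset.mem_erase, Finset.mem_erase] at hx
    simp only [hG]
    rw [hdepth' x, if_neg (by tauto)]
  have hdp' : T'.depth p = E := by
    rw [hdepth' p, if_neg (by push_neg; exact ⟨hps, hpl₂⟩), hdp]
  have hds' : T'.depth s = T.depth l₁ + 1 := by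
    rw [hdepth' s, if_pos (Or.inl rfl)]
  have hdl₂' : T'.depth l₂ = T.depth l₁ + 1 := by
    rw [hdepth' l₂, if_pos (Or.inr rfl)]
  have hGp : G p = ((E : ℕ) : ℝ) * (1 / 2) ^ E := by
    simp only [hG]
    rw [hdp']
  have hGs : G s = ((T.depth l₁ + 1 : ℕ) : ℝ) * (1 / 2) ^ (T.depth l₁ + 1) := by
    simp only [hG]
    rw [hds']
  have hGl₂ : G l₂ = ((T.depth l₁ + 1 : ℕ) : ℝ) * (1 / 2) ^ (T.depth l₁ + 1) := by
    simp only [hG]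
    rw [hdl₂']
  refine ⟨T', hbin', hcard, ?_⟩
  rw [hgT, hgT', hsplitT, hsplitT', hrem, hGp, hGs, hGl₂, hds, hE]
  have hk := key_ineq (T.depth l₁) E (by omega)
  push_cast at hk ⊢
  linarith
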